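/- Let X be any k-dimensional simplicial complex on a finite vertex set V. Then φ(X) ≤ h̃(X); moreover, if φ(K(X)) > 0 (equivalently, the completion K(X) has trivial (k−1)-st Z₂-cohomology), then h̃(X) ≤ (|V|/φ(K(X)))·φ(X). -/

import Mathlib

open Finset

namespace HigherCheeger

variable {V : Type*} [DecidableEq V] [Fintype V] [LinearOrder V]

/-- An abstract simplicial complex: a family of finite subsets of `V`
closed under taking subsets. -/
def IsComplex (X : Finset (Finset V)) : Prop :=
  ∀ σ ∈ X, ∀ τ ⊆ σ, τ ∈ X

/-- `X` is `k`-dimensional: every face has at most `k+1` vertices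
and some face has exactly `k+1` vertices. -/
def IsDim (X : Finset (Finset V)) (k : ℕ) : Prop :=
  (∀ σ ∈ X, σ.card ≤ k + 1) ∧ ∃ σ ∈ X, σ.card = k + 1

/-- The faces of `X` of cardinality `c` (i.e. of dimension `c - 1`). -/
def faces (X : Finset (Finset V)) (c : ℕ) : Finset (Finset V) :=
  X.filter fun σ => σ.card = c

/-- `X` has complete `(k-1)`-skeleton: every subset of `V` of size at most `k` is a face. -/
def CompleteSkeleton (X : Finset (Finset V)) (k : ℕ) : Prop :=
  ∀ σ : Finset V, σ.card ≤ k → σ ∈ X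

/-- The `k`-dimensional completion `K(X)`. -/
def completion (X : Finset (Finset V)) (k : ℕ) : Finset (Finset V) :=
  X ∪ (Finset.univ.filter fun τ : Finset V => τ.card = k + 1 ∧ ∀ v ∈ τ, τ.erase v ∈ X)

/-- The complete `k`-dimensional complex `K_n^k` on the vertex set `V`. -/
def completeComplex (V : Type*) [DecidableEq V] [Fintype V] (k : ℕ) : Finset (Finset V) :=
  Finset.univ.filter fun σ : Finset V => σ.card ≤ k + 1

/-- The oriented incidence number `[τ:σ]` (with respect to the linear order on `V`):
`(-1)^j` if `σ = τ \ {v_j}` where `v_j` is the `j`-th smallest vertex of `τ`, and `0` otherwise. -/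
def incidence (τ σ : Finset V) : ℝ :=
  if σ ⊆ τ ∧ σ.card + 1 = τ.card then
    ∑ v ∈ τ \ σ, (-1 : ℝ) ^ (τ.filter fun w => w < v).card
  else 0

/-- The real coboundary operator `δ` applied to a cochain living on the faces of
cardinality `c`; the result lives on faces of cardinality `c + 1`. -/
def delta (X : Finset (Finset V)) (c : ℕ) (f : Finset V → ℝ) : Finset V → ℝ :=
  fun τ => ∑ σ ∈ faces X c, incidence τ σ * f σ

/-- The real boundary operator `∂` (the adjoint of `δ`) applied to a cochain living
on the faces of cardinality `c`; the result lives on faces of cardinality `c - 1`. -/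
def bdry (X : Finset (Finset V)) (c : ℕ) (f : Finset V → ℝ) : Finset V → ℝ :=
  fun σ => ∑ τ ∈ faces X c, incidence τ σ * f τ

/-- The inner product of two cochains on the faces of cardinality `c`. -/
def inn (X : Finset (Finset V)) (c : ℕ) (f g : Finset V → ℝ) : ℝ :=
  ∑ σ ∈ faces X c, f σ * g σ

/-- The upper Laplacian `L^up_{k-1} = ∂_k δ_{k-1}` acting on `(k-1)`-cochains
(functions on faces of cardinality `k`). -/
def lapUp (X : Finset (Finset V)) (k : ℕ) (f : Finset V → ℝ) : Finset V → ℝ :=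
  bdry X (k + 1) (delta X k f)

/-- The lower Laplacian `L^down_{k-1} = δ_{k-2} ∂_{k-1}` acting on `(k-1)`-cochains. -/
def lapDown (X : Finset (Finset V)) (k : ℕ) (f : Finset V → ℝ) : Finset V → ℝ :=
  delta X (k - 1) (bdry X k f)

/-- `f ∈ Z_{k-1}(X;ℝ) = ker ∂_{k-1}`. -/
def IsCycle (X : Finset (Finset V)) (k : ℕ) (f : Finset V → ℝ) : Prop :=
  ∀ σ : Finset V, bdry X k f σ = 0

/-- `f ∈ B^{k-1}(X;ℝ) = im δ_{k-2}` (as a cochain, i.e. on the `(k-1)`-faces). -/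
def IsCobdry (X : Finset (Finset V)) (k : ℕ) (f : Finset V → ℝ) : Prop :=
  ∃ g : Finset V → ℝ, ∀ σ ∈ faces X k, f σ = delta X (k - 1) g σ

/-- The spectral gap `λ(X)`: the minimum of the Rayleigh quotient
`⟨L^up_{k-1}(X) f, f⟩ / ⟨f, f⟩` over nonzero `f ∈ Z_{k-1}(X;ℝ)`. -/
noncomputable def spectralGap (X : Finset (Finset V)) (k : ℕ) : ℝ :=
  sInf {r : ℝ | ∃ f : Finset V → ℝ, IsCycle X k f ∧ inn X k f f ≠ 0 ∧
    r = inn X k (lapUp X k f) f / inn X k f f}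

/-- A partition of `V` into `m` (nonempty) parts. -/
def IsPartition {m : ℕ} (A : Fin m → Finset V) : Prop :=
  (∀ i, (A i).Nonempty) ∧ ∀ v : V, ∃! i, v ∈ A i

/-- The linear order on `V` is adapted to the family of parts `A`. -/
def OrderAdapted {m : ℕ} (A : Fin m → Finset V) : Prop :=
  ∀ i j : Fin m, i < j → ∀ v ∈ A i, ∀ w ∈ A j, v < w

/-- `F(A_0,…,A_k)`: the `k`-faces of `X` with exactly one vertex in each part. -/
def Fset (X : Finset (Finset V)) (k : ℕ) (A : Fin (k + 1) → Finset V) : Finset (Finset V) :=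
  (faces X (k + 1)).filter fun τ => ∀ i, (τ ∩ A i).card = 1

/-- `F^∂(A_0,…,A_k)`: the `(k+1)`-element members of `K(X)` with exactly one vertex
in each part. -/
def Fpar (X : Finset (Finset V)) (k : ℕ) (A : Fin (k + 1) → Finset V) : Finset (Finset V) :=
  (faces (completion X k) (k + 1)).filter fun τ => ∀ i, (τ ∩ A i).card = 1

/-- The value `|V|·|F(A_0,…,A_k)| / |F^∂(A_0,…,A_k)|` of a partition
(`⊤` if the denominator is `0`). -/
noncomputable def cheegerVal (X : Finset (Finset V)) (k : ℕ) (A : Fin (k + 1) → Finset V) :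
    EReal :=
  if (Fpar X k A).card = 0 then ⊤
  else (((Fintype.card V * (Fset X k A).card : ℝ) / ((Fpar X k A).card : ℝ) : ℝ) : EReal)

/-- The Cheeger constant `h(X)`. -/
noncomputable def cheeger (X : Finset (Finset V)) (k : ℕ) : EReal :=
  sInf {r : EReal | ∃ A : Fin (k + 1) → Finset V, IsPartition A ∧ r = cheegerVal X k A}

/-- `d(σ)`: the number of members of `F^∂(A_0,…,A_k)` containing `σ`. -/
def degPar (X : Finset (Finset V)) (k : ℕ) (A : Fin (k + 1) → Finset V) (σ : Finset V) : ℕ :=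
  ((Fpar X k A).filter fun τ => σ ⊆ τ).card

/-- `C(X)` (with respect to the partition `A`):
the maximum over `τ ∈ F^∂(A_0,…,A_k)` of `∑_{v ∈ τ} d(τ \ {v})`. -/
def Cconst (X : Finset (Finset V)) (k : ℕ) (A : Fin (k + 1) → Finset V) : ℕ :=
  (Fpar X k A).sup fun τ => ∑ v ∈ τ, degPar X k A (τ.erase v)

/-- The cochain associated to a partition `A`: `σ ↦ (-1)^l·|A_l|` if `A_l` is the unique
part disjoint from `σ`, and `0` otherwise. -/
def assocCochain {k : ℕ} (A : Fin (k + 1) → Finset V) (σ : Finset V) : ℝ :=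
  if (Finset.univ.filter fun l => σ ∩ A l = ∅).card = 1 then
    ∑ l ∈ Finset.univ.filter fun l => σ ∩ A l = ∅, (-1 : ℝ) ^ (l : ℕ) * ((A l).card : ℝ)
  else 0

/-- The `Z₂`-coboundary: a `(c-1)`-cochain `f` is sent to
`τ ↦ ∑_{v ∈ τ} f (τ \ {v})`. -/
def deltaZ2 (f : Finset V → ZMod 2) (τ : Finset V) : ZMod 2 :=
  ∑ v ∈ τ, f (τ.erase v)

/-- The support of the `Z₂`-coboundary of `f` in `X`: the faces of `X` of cardinality
`k + 1` on which the `Z₂`-coboundary of `f` is nonzero.  Its cardinality is `|δ_X f|`. -/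
def suppDelta (X : Finset (Finset V)) (k : ℕ) (f : Finset V → ZMod 2) : Finset (Finset V) :=
  (faces X (k + 1)).filter fun τ => deltaZ2 f τ ≠ 0

/-- `F(A_0,…,A_{k-1})`: the `(k-1)`-faces of `X` with exactly one vertex in each of
the `k` parts. -/
def FsetLow (X : Finset (Finset V)) (k : ℕ) (A : Fin k → Finset V) : Finset (Finset V) :=
  (faces X k).filter fun σ => ∀ i, (σ ∩ A i).card = 1

/-- The Cheeger-type constant `h'(X)`. -/
noncomputable def cheeger' (X : Finset (Finset V)) (k : ℕ) : EReal :=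
  sInf {r : EReal | ∃ (A : Fin k → Finset V) (f : Finset V → ZMod 2),
    IsPartition A ∧ (∀ σ, f σ ≠ 0 → σ ∈ FsetLow X k A) ∧
    r = if (suppDelta (completion X k) k f).card = 0 then (⊤ : EReal)
        else (((Fintype.card V * (suppDelta X k f).card : ℝ) /
              ((suppDelta (completion X k) k f).card : ℝ) : ℝ) : EReal)}

/-- The Hamming norm of a `Z₂`-cochain on the faces of cardinality `c`. -/
def hamming (X : Finset (Finset V)) (c : ℕ) (f : Finset V → ZMod 2) : ℕ :=
  ((faces X c).filter fun σ => f σ ≠ 0).card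

/-- `|[f]|`: the minimum Hamming norm of `f + δ_X g` over `g ∈ C^{k-2}(X;Z₂)`. -/
noncomputable def normClass (X : Finset (Finset V)) (k : ℕ) (f : Finset V → ZMod 2) : ℕ :=
  sInf {m : ℕ | ∃ g : Finset V → ZMod 2, m = hamming X k fun σ => f σ + deltaZ2 g σ}

/-- The coboundary expansion `φ(X) = min_f |δ_X f| / |[f]|` (quotients with denominator
`0` are `∞`). -/
noncomputable def phi (X : Finset (Finset V)) (k : ℕ) : EReal :=
  sInf {r : EReal | ∃ f : Finset V → ZMod 2,
    r = if normClass X k f = 0 then (⊤ : EReal)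
        else ((((suppDelta X k f).card : ℝ) / (normClass X k f : ℝ) : ℝ) : EReal)}

/-- `h̃(X) = min_f |V|·|δ_X f| / |δ_{K(X)} f|` (quotients with denominator `0` are `∞`). -/
noncomputable def htilde (X : Finset (Finset V)) (k : ℕ) : EReal :=
  sInf {r : EReal | ∃ f : Finset V → ZMod 2,
    r = if (suppDelta (completion X k) k f).card = 0 then (⊤ : EReal)
        else (((Fintype.card V * (suppDelta X k f).card : ℝ) /
              ((suppDelta (completion X k) k f).card : ℝ) : ℝ) : EReal)}
section Helpers
set_option linter.unusedSectionVars false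
variable {V : Type*} [DecidableEq V] [Fintype V] [LinearOrder V]

lemma deltaZ2_deltaZ2 (g : Finset V → ZMod 2) (τ : Finset V) :
    deltaZ2 (deltaZ2 g) τ = 0 := by
  unfold deltaZ2
  rw [Finset.sum_sigma']
  refine Finset.sum_involution (fun p hp => ⟨p.2, p.1⟩) ?_ ?_ ?_ ?_
  · intro ⟨v, w⟩ hp
    simp only [Finset.mem_sigma, Finset.mem_erase] at hp
    rw [Finset.erase_right_comm]
    exact CharTwo.add_self_eq_zero _
  · intro ⟨v, w⟩ hp _
    simp only [Finset.mem_sigma, Finset.mem_erase] at hp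
    intro h
    have := congrArg Sigma.fst h
    simp at this
    exact hp.2.1 this
  · intro ⟨v, w⟩ hp
    simp only [Finset.mem_sigma, Finset.mem_erase] at hp ⊢
    exact ⟨hp.2.2, fun h => hp.2.1 h.symm, hp.1⟩
  · intro ⟨v, w⟩ hp; rfl

lemma deltaZ2_add_delta (f g : Finset V → ZMod 2) (τ : Finset V) :
    deltaZ2 (fun σ => f σ + deltaZ2 g σ) τ = deltaZ2 f τ := by
  have h : deltaZ2 (fun σ => f σ + deltaZ2 g σ) τ
      = deltaZ2 f τ + deltaZ2 (deltaZ2 g) τ := by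
    simp [deltaZ2, Finset.sum_add_distrib]
  rw [h, deltaZ2_deltaZ2, add_zero]

lemma faces_completion_eq (X : Finset (Finset V)) (k : ℕ) :
    faces (completion X k) k = faces X k := by
  ext σ
  simp only [faces, completion, Finset.mem_filter, Finset.mem_union, Finset.mem_univ,
    true_and]
  constructor
  · rintro ⟨h | ⟨h1, _⟩, hc⟩
    · exact ⟨h, hc⟩
    · omega
  · rintro ⟨h, hc⟩; exact ⟨Or.inl h, hc⟩

lemma erase_mem_faces (X : Finset (Finset V)) (k : ℕ) (hX : IsComplex X)
    {τ : Finset V} (hτ : τ ∈ faces (completion X k) (k + 1)) {v : V} (hv : v ∈ τ) :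
    τ.erase v ∈ faces X k := by
  obtain ⟨hm, hc⟩ := Finset.mem_filter.mp hτ
  have hcard : (τ.erase v).card = k := by
    rw [Finset.card_erase_of_mem hv, hc]
    omega
  refine Finset.mem_filter.mpr ⟨?_, hcard⟩
  rcases Finset.mem_union.mp hm with h | h
  · exact hX τ h _ (Finset.erase_subset v τ)
  · exact (Finset.mem_filter.mp h).2.2 v hv

lemma suppDelta_card_le (X : Finset (Finset V)) (k : ℕ) (hX : IsComplex X)
    (h : Finset V → ZMod 2) :
    (suppDelta (completion X k) k h).card ≤ Fintype.card V * hamming X k h := by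
  have hsub : suppDelta (completion X k) k h ⊆
      ((faces X k).filter fun σ => h σ ≠ 0).biUnion
        (fun σ => Finset.univ.image fun w => insert w σ) := by
    intro τ hτ
    obtain ⟨hτf, hd⟩ := Finset.mem_filter.mp hτ
    obtain ⟨v, hv, hval⟩ : ∃ v ∈ τ, h (τ.erase v) ≠ 0 := by
      by_contra hc
      push_neg at hc
      exact hd (Finset.sum_eq_zero hc)
    refine Finset.mem_biUnion.mpr ⟨τ.erase v, ?_, ?_⟩
    · exact Finset.mem_filter.mpr ⟨erase_mem_faces X k hX hτf hv, hval⟩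
    · exact Finset.mem_image.mpr ⟨v, Finset.mem_univ v, Finset.insert_erase hv⟩
  calc (suppDelta (completion X k) k h).card
      ≤ _ := Finset.card_le_card hsub
    _ ≤ ∑ σ ∈ (faces X k).filter fun σ => h σ ≠ 0,
          (Finset.univ.image fun w => insert w σ).card := Finset.card_biUnion_le
    _ ≤ ∑ _σ ∈ (faces X k).filter fun σ => h σ ≠ 0, Fintype.card V := by
        refine Finset.sum_le_sum fun σ _ => ?_
        calc (Finset.univ.image fun w => insert w σ).card ≤ Finset.univ.card :=
              Finset.card_image_le
          _ = Fintype.card V := Finset.card_univ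
    _ = Fintype.card V * hamming X k h := by
        rw [Finset.sum_const, smul_eq_mul, hamming, mul_comm]

lemma suppDelta_add_delta (Y : Finset (Finset V)) (k : ℕ) (f g : Finset V → ZMod 2) :
    suppDelta Y k (fun σ => f σ + deltaZ2 g σ) = suppDelta Y k f := by
  unfold suppDelta
  refine Finset.filter_congr fun τ _ => ?_
  rw [deltaZ2_add_delta]

lemma normClass_completion (X : Finset (Finset V)) (k : ℕ) (f : Finset V → ZMod 2) :
    normClass (completion X k) k f = normClass X k f := by
  unfold normClass hamming
  rw [faces_completion_eq]

lemma normClass_zero_deltaZ2 (X : Finset (Finset V)) (k : ℕ) (hX : IsComplex X)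
    (f : Finset V → ZMod 2) (hf : normClass X k f = 0) :
    ∀ τ ∈ faces (completion X k) (k + 1), deltaZ2 f τ = 0 := by
  have hne : {m : ℕ | ∃ g : Finset V → ZMod 2,
      m = hamming X k fun σ => f σ + deltaZ2 g σ}.Nonempty := ⟨_, 0, rfl⟩
  have h0 : 0 ∈ {m : ℕ | ∃ g : Finset V → ZMod 2,
      m = hamming X k fun σ => f σ + deltaZ2 g σ} := by
    rcases (Nat.sInf_eq_zero.mp hf) with h | h
    · exact h
    · exact absurd (h ▸ hne) (by simp [h])
  obtain ⟨g, hg⟩ := h0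
  have hzero : ∀ σ ∈ faces X k, f σ = deltaZ2 g σ := by
    intro σ hσ
    have := Finset.card_eq_zero.mp hg.symm
    have hmem : f σ + deltaZ2 g σ = 0 := by
      by_contra hne'
      have : σ ∈ (faces X k).filter (fun σ => (fun σ => f σ + deltaZ2 g σ) σ ≠ 0) :=
        Finset.mem_filter.mpr ⟨hσ, hne'⟩
      rw [show ((faces X k).filter fun σ => (fun σ => f σ + deltaZ2 g σ) σ ≠ 0) = ∅ from
        Finset.card_eq_zero.mp hg.symm] at this
      exact absurd this (Finset.notMem_empty σ)
    calc f σ = (f σ + deltaZ2 g σ) + deltaZ2 g σ := by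
          rw [add_assoc, CharTwo.add_self_eq_zero, add_zero]
      _ = deltaZ2 g σ := by rw [hmem, zero_add]
  intro τ hτ
  have : deltaZ2 f τ = deltaZ2 (deltaZ2 g) τ := by
    unfold deltaZ2
    refine Finset.sum_congr rfl fun v hv => ?_
    exact hzero _ (erase_mem_faces X k hX hτ hv)
  rw [this, deltaZ2_deltaZ2]

end Helpers
section Main
set_option linter.unusedSectionVars false
variable {V : Type*} [DecidableEq V] [Fintype V] [LinearOrder V]

lemma exists_normClass_ne_zero (X : Finset (Finset V)) (k : ℕ) (hX : IsComplex X)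
    (hdim : IsDim X k) : ∃ f : Finset V → ZMod 2, normClass X k f ≠ 0 := by
  obtain ⟨τ₀, hτ₀X, hcard⟩ := hdim.2
  have hne : τ₀.Nonempty := Finset.card_pos.mp (by omega)
  obtain ⟨v₀, hv₀⟩ := hne
  refine ⟨fun σ => if σ = τ₀.erase v₀ then 1 else 0, fun h0 => ?_⟩
  have hτfaces : τ₀ ∈ faces (completion X k) (k + 1) :=
    Finset.mem_filter.mpr ⟨Finset.mem_union_left _ hτ₀X, hcard⟩
  have hz := normClass_zero_deltaZ2 X k hX _ h0 τ₀ hτfaces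
  have hval : deltaZ2 (fun σ => if σ = τ₀.erase v₀ then (1 : ZMod 2) else 0) τ₀ = 1 := by
    unfold deltaZ2
    rw [Finset.sum_eq_single_of_mem v₀ hv₀]
    · simp
    · intro v hv hvne
      have hne' : τ₀.erase v ≠ τ₀.erase v₀ := by
        intro he
        have : v₀ ∈ τ₀.erase v := Finset.mem_erase.mpr ⟨Ne.symm hvne, hv₀⟩
        rw [he] at this
        exact Finset.notMem_erase v₀ τ₀ this
      simp [hne']
  rw [hval] at hz
  exact one_ne_zero hz

theorem phi_le_htilde_and_upper_bound'
    (X : Finset (Finset V)) (k : ℕ)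
    (hX : IsComplex X) (hdim : IsDim X k) :
    phi X k ≤ htilde X k ∧
      (0 < phi (completion X k) k →
        htilde X k ≤
          (((Fintype.card V : ℝ) : EReal) / phi (completion X k) k) * phi X k) := by
  constructor
  · refine le_sInf ?_
    rintro r ⟨f, hr⟩
    by_cases hb : (suppDelta (completion X k) k f).card = 0
    · rw [hr, if_pos hb]; exact le_top
    rw [hr, if_neg hb]
    have hm : normClass X k f ≠ 0 := by
      intro h0
      apply hb
      have hempty : suppDelta (completion X k) k f = ∅ := by
        unfold suppDelta
        refine Finset.filter_eq_empty_iff.mpr fun τ hτ => ?_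
        simpa using normClass_zero_deltaZ2 X k hX f h0 τ hτ
      rw [hempty, Finset.card_empty]
    have hphile : phi X k ≤
        ((((suppDelta X k f).card : ℝ) / (normClass X k f : ℝ) : ℝ) : EReal) :=
      sInf_le ⟨f, by rw [if_neg hm]⟩
    refine le_trans hphile ?_
    rw [EReal.coe_le_coe_iff]
    have hSne : {m : ℕ | ∃ g : Finset V → ZMod 2,
        m = hamming X k fun σ => f σ + deltaZ2 g σ}.Nonempty := ⟨_, 0, rfl⟩
    obtain ⟨g, hg⟩ : ∃ g : Finset V → ZMod 2,
        normClass X k f = hamming X k fun σ => f σ + deltaZ2 g σ := Nat.sInf_mem hSne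
    have hble : (suppDelta (completion X k) k f).card
        ≤ Fintype.card V * normClass X k f := by
      rw [hg, ← suppDelta_add_delta (completion X k) k f g]
      exact suppDelta_card_le X k hX _
    have hm' : (0 : ℝ) < (normClass X k f : ℝ) :=
      Nat.cast_pos.mpr (Nat.pos_of_ne_zero hm)
    have hb' : (0 : ℝ) < ((suppDelta (completion X k) k f).card : ℝ) :=
      Nat.cast_pos.mpr (Nat.pos_of_ne_zero hb)
    rw [div_le_div_iff₀ hm' hb']
    have hble' : ((suppDelta (completion X k) k f).card : ℝ)
        ≤ (Fintype.card V : ℝ) * (normClass X k f : ℝ) := by exact_mod_cast hble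
    have ha' : (0 : ℝ) ≤ ((suppDelta X k f).card : ℝ) := Nat.cast_nonneg _
    nlinarith
  · intro hphiK
    -- phi X k is attained
    have hSeq : {r : EReal | ∃ f : Finset V → ZMod 2,
        r = if normClass X k f = 0 then (⊤ : EReal)
        else ((((suppDelta X k f).card : ℝ) / (normClass X k f : ℝ) : ℝ) : EReal)}
        = Set.range (fun f : Finset V → ZMod 2 =>
          if normClass X k f = 0 then (⊤ : EReal)
          else ((((suppDelta X k f).card : ℝ) / (normClass X k f : ℝ) : ℝ) : EReal)) := by
      ext r
      simp [eq_comm]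
    have hmem : phi X k ∈ Set.range (fun f : Finset V → ZMod 2 =>
        if normClass X k f = 0 then (⊤ : EReal)
        else ((((suppDelta X k f).card : ℝ) / (normClass X k f : ℝ) : ℝ) : EReal)) := by
      rw [phi, hSeq]
      exact Set.Nonempty.csInf_mem (Set.range_nonempty _) (Set.finite_range _)
    obtain ⟨f, hf'⟩ := hmem
    have hf : phi X k = if normClass X k f = 0 then (⊤ : EReal)
        else ((((suppDelta X k f).card : ℝ) / (normClass X k f : ℝ) : ℝ) : EReal) :=
      hf'.symm
    -- phi X k < ⊤
    obtain ⟨f₀, hf₀⟩ := exists_normClass_ne_zero X k hX hdim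
    have hlt : phi X k < ⊤ := by
      have : phi X k ≤ ((((suppDelta X k f₀).card : ℝ) / (normClass X k f₀ : ℝ) : ℝ) :
          EReal) := sInf_le ⟨f₀, by rw [if_neg hf₀]⟩
      exact lt_of_le_of_lt this (EReal.coe_lt_top _)
    have hm : normClass X k f ≠ 0 := by
      intro h0
      rw [hf, if_pos h0] at hlt
      exact lt_irrefl _ hlt
    rw [if_neg hm] at hf
    have hmK : normClass (completion X k) k f ≠ 0 := by
      rw [normClass_completion]; exact hm
    have hm' : (0 : ℝ) < (normClass X k f : ℝ) :=
      Nat.cast_pos.mpr (Nat.pos_of_ne_zero hm)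
    -- b ≠ 0
    have hb : (suppDelta (completion X k) k f).card ≠ 0 := by
      intro h0
      have : phi (completion X k) k ≤
          ((((suppDelta (completion X k) k f).card : ℝ) /
            (normClass (completion X k) k f : ℝ) : ℝ) : EReal) :=
        sInf_le ⟨f, by rw [if_neg hmK]⟩
      rw [h0] at this
      simp only [Nat.cast_zero, zero_div, EReal.coe_zero] at this
      exact absurd (lt_of_lt_of_le hphiK this) (lt_irrefl _)
    have hb' : (0 : ℝ) < ((suppDelta (completion X k) k f).card : ℝ) :=
      Nat.cast_pos.mpr (Nat.pos_of_ne_zero hb)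
    -- phi K ≤ b / m
    have hphiKle : phi (completion X k) k ≤
        ((((suppDelta (completion X k) k f).card : ℝ) / (normClass X k f : ℝ) : ℝ) :
          EReal) := by
      refine sInf_le ⟨f, ?_⟩
      rw [if_neg hmK, normClass_completion]
    have hT : phi (completion X k) k ≠ ⊤ :=
      (lt_of_le_of_lt hphiKle (EReal.coe_lt_top _)).ne
    have hB : phi (completion X k) k ≠ ⊥ := ne_bot_of_gt hphiK
    set p := (phi (completion X k) k).toReal with hpdef
    have hp : phi (completion X k) k = (p : EReal) := (EReal.coe_toReal hT hB).symm
    have hppos : (0 : ℝ) < p := by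
      rw [hp] at hphiK
      exact_mod_cast hphiK
    have hpm : p * (normClass X k f : ℝ) ≤
        ((suppDelta (completion X k) k f).card : ℝ) := by
      rw [hp, EReal.coe_le_coe_iff] at hphiKle
      exact (le_div_iff₀ hm').mp hphiKle
    -- htilde ≤ |V| a / b
    have hhle : htilde X k ≤
        (((Fintype.card V * (suppDelta X k f).card : ℝ) /
          ((suppDelta (completion X k) k f).card : ℝ) : ℝ) : EReal) :=
      sInf_le ⟨f, by rw [if_neg hb]⟩
    refine le_trans hhle ?_
    rw [hp, hf, ← EReal.coe_div, ← EReal.coe_mul, EReal.coe_le_coe_iff]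
    have hkey : (Fintype.card V : ℝ) / p * (((suppDelta X k f).card : ℝ) /
        (normClass X k f : ℝ)) =
        ((Fintype.card V : ℝ) * ((suppDelta X k f).card : ℝ)) /
          (p * (normClass X k f : ℝ)) := by
      exact div_mul_div_comm _ _ _ _
    rw [hkey]
    have hnum : (0 : ℝ) ≤ (Fintype.card V : ℝ) * ((suppDelta X k f).card : ℝ) := by
      exact mul_nonneg (Nat.cast_nonneg _) (Nat.cast_nonneg _)
    have hpm' : (0 : ℝ) < p * (normClass X k f : ℝ) := by positivity
    rw [div_le_div_iff₀ hb' hpm']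
    push_cast
    nlinarith
  end Main


/-- For any `k`-dimensional complex `X`: `φ(X) ≤ h̃(X)`; moreover, if `φ(K(X)) > 0`
then `h̃(X) ≤ (|V|/φ(K(X)))·φ(X)`. -/
theorem phi_le_htilde_and_upper_bound
    {V : Type*} [DecidableEq V] [Fintype V] [LinearOrder V]
    (X : Finset (Finset V)) (k : ℕ)
    (hX : IsComplex X) (hdim : IsDim X k) :
    phi X k ≤ htilde X k ∧
      (0 < phi (completion X k) k →
        htilde X k ≤
          (((Fintype.card V : ℝ) : EReal) / phi (completion X k) k) * phi X k) := by
  exact phi_le_htilde_and_upper_bound' X k hX hdim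


end HigherCheeger
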